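/- (Convergence of ADM for the TV/L2 problem.) Let V be the space of real m×n matrices and W the space of real p×q matrices, both with the Frobenius inner product; let L : V → W be linear, let H₁ be a real n×n matrix, H₂ a real m×m matrix, B ∈ V, and set F(X) = ‖H₂XH₁ᵀ − B‖_F². Let G : W → ℝ be convex, let β > 0, and define L_β(X,Y,Z) = F(X) + G(Y) + ⟨L(X) − Y, Z⟩_F + (β/2)‖L(X) − Y‖_F². Assume (X*,Y*,Z*) is a saddle point of L_β for every β > 0. Let sequences (X_k), (Y_k), (Z_k) satisfy: X_{k+1} minimizes X ↦ L_β(X, Y_k, Z_k) over V; Y_{k+1} minimizes Y ↦ L_β(X_{k+1}, Y, Z_k) over W; and Z_{k+1} = Z_k + β(L(X_{k+1}) − Y_{k+1}). Then (1) F(X_{k+1}) + G(Y_{k+1}) → F(X*) + G(Y*) as k → ∞, and (2) ‖L(X_{k+1}) − Y_{k+1}‖_F → 0 as k → ∞. -/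

import Mathlib

open Matrix Filter Topology

/-- Frobenius inner product on real matrices. -/
noncomputable def fip {m n : ℕ} (A B : Matrix (Fin m) (Fin n) ℝ) : ℝ :=
  (Aᵀ * B).trace

/-- Frobenius norm on real matrices. -/
noncomputable def fnorm {m n : ℕ} (A : Matrix (Fin m) (Fin n) ℝ) : ℝ :=
  Real.sqrt (fip A A)

/-- The augmented Lagrangian `L_β(X,Y,Z)`. -/
noncomputable def aug {m n p q : ℕ}
    (L : Matrix (Fin m) (Fin n) ℝ →ₗ[ℝ] Matrix (Fin p) (Fin q) ℝ)
    (F : Matrix (Fin m) (Fin n) ℝ → ℝ) (G : Matrix (Fin p) (Fin q) ℝ → ℝ)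
    (β : ℝ) (X : Matrix (Fin m) (Fin n) ℝ) (Y Z : Matrix (Fin p) (Fin q) ℝ) : ℝ :=
  F X + G Y + fip (L X - Y) Z + β / 2 * (fnorm (L X - Y)) ^ 2


open RealInnerProductSpace


lemma pos_quad {a b : ℝ} (hb : 0 ≤ b)
    (h : ∀ t : ℝ, 0 < t → t ≤ 1 → 0 ≤ t * a + t ^ 2 * b) : 0 ≤ a := by
  by_contra hneg
  push_neg at hneg
  set t : ℝ := min 1 ((-a) / (2 * (b + 1))) with ht
  have h1 : 0 < (-a) / (2 * (b + 1)) := div_pos (by linarith) (by linarith)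
  have h2 : 0 < t := lt_min one_pos h1
  have h3 : t ≤ 1 := min_le_left _ _
  have h4 : t ≤ (-a) / (2 * (b + 1)) := min_le_right _ _
  have h6 : t * (2 * (b + 1)) ≤ -a := (le_div_iff₀ (by linarith)).mp h4
  have h5 := h t h2 h3
  nlinarith [mul_pos h2 h2, mul_nonneg h2.le hb]

lemma sq_norm_combo {E : Type*} [NormedAddCommGroup E] [InnerProductSpace ℝ E]
    {a b : ℝ} (ha : 0 ≤ a) (hb : 0 ≤ b) (hab : a + b = 1) (u v : E) :
    ‖a • u + b • v‖ ^ 2 ≤ a * ‖u‖ ^ 2 + b * ‖v‖ ^ 2 := by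
  have h := norm_add_sq_real (a • u) (b • v)
  have h2 : ⟪a • u, b • v⟫ = a * b * ⟪u, v⟫ := by
    rw [real_inner_smul_left, real_inner_smul_right]; ring
  have h3 := real_inner_le_norm u v
  have h4 : ‖a • u‖ = a * ‖u‖ := by rw [norm_smul, Real.norm_eq_abs, abs_of_nonneg ha]
  have h5 : ‖b • v‖ = b * ‖v‖ := by rw [norm_smul, Real.norm_eq_abs, abs_of_nonneg hb]
  have key : a * ‖u‖ ^ 2 + b * ‖v‖ ^ 2 - ((a * ‖u‖) ^ 2 + 2 * (a * b * ⟪u, v⟫) + (b * ‖v‖) ^ 2)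
      = a * b * ((‖u‖ - ‖v‖) ^ 2 + 2 * (‖u‖ * ‖v‖ - ⟪u, v⟫)) := by
    linear_combination (-(a * ‖u‖ ^ 2 + b * ‖v‖ ^ 2)) * hab
  have pos : 0 ≤ a * b * ((‖u‖ - ‖v‖) ^ 2 + 2 * (‖u‖ * ‖v‖ - ⟪u, v⟫)) :=
    mul_nonneg (mul_nonneg ha hb) (by nlinarith [sq_nonneg (‖u‖ - ‖v‖)])
  rw [h, h2, h4, h5]
  linarith

lemma subgrad {E : Type*} [NormedAddCommGroup E] [InnerProductSpace ℝ E]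
    {φ : E → ℝ} (hφ : ConvexOn ℝ Set.univ φ) {r : E → ℝ} {x₀ : E}
    (hmin : ∀ x, φ x₀ + r x₀ ≤ φ x + r x)
    (a b : E → ℝ) (hb : ∀ x, 0 ≤ b x)
    (hr : ∀ x, ∀ t : ℝ, r (x₀ + t • (x - x₀)) = r x₀ + t * a x + t ^ 2 * b x) :
    ∀ x, φ x₀ ≤ φ x + a x := by
  intro x
  have key : 0 ≤ φ x - φ x₀ + a x := by
    apply pos_quad (hb x)
    intro t ht ht1
    have hconv := hφ.2 (Set.mem_univ x₀) (Set.mem_univ x)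
      (by linarith : (0:ℝ) ≤ 1 - t) ht.le (by ring)
    have heq : (1 - t) • x₀ + t • x = x₀ + t • (x - x₀) := by module
    rw [heq] at hconv
    have hm := hmin (x₀ + t • (x - x₀))
    rw [hr x t] at hm
    simp only [smul_eq_mul] at hconv
    nlinarith
  linarith

noncomputable def AUG {E₁ E₂ : Type*} [NormedAddCommGroup E₁] [InnerProductSpace ℝ E₁]
    [NormedAddCommGroup E₂] [InnerProductSpace ℝ E₂]
    (L : E₁ →ₗ[ℝ] E₂) (F : E₁ → ℝ) (G : E₂ → ℝ) (β : ℝ) (X : E₁) (Y Z : E₂) : ℝ :=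
  F X + G Y + ⟪L X - Y, Z⟫ + β / 2 * ‖L X - Y‖ ^ 2

set_option maxHeartbeats 1000000 in
theorem admm_abstract {E₁ E₂ : Type*} [NormedAddCommGroup E₁] [InnerProductSpace ℝ E₁]
    [NormedAddCommGroup E₂] [InnerProductSpace ℝ E₂]
    (L : E₁ →ₗ[ℝ] E₂) (F : E₁ → ℝ) (hF : ConvexOn ℝ Set.univ F)
    (G : E₂ → ℝ) (hG : ConvexOn ℝ Set.univ G)
    (β : ℝ) (hβ : 0 < β) (Xs : E₁) (Ys Zs : E₂)
    (hsaddle : ∀ β' > (0:ℝ), ∀ X Y Z,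
      AUG L F G β' Xs Ys Z ≤ AUG L F G β' Xs Ys Zs ∧
      AUG L F G β' Xs Ys Zs ≤ AUG L F G β' X Y Zs)
    (X : ℕ → E₁) (Y Z : ℕ → E₂)
    (hX : ∀ k, ∀ X', AUG L F G β (X (k+1)) (Y k) (Z k) ≤ AUG L F G β X' (Y k) (Z k))
    (hY : ∀ k, ∀ Y', AUG L F G β (X (k+1)) (Y (k+1)) (Z k) ≤ AUG L F G β (X (k+1)) Y' (Z k))
    (hZ : ∀ k, Z (k+1) = Z k + β • (L (X (k+1)) - Y (k+1))) :
    Tendsto (fun k => F (X (k+1)) + G (Y (k+1))) atTop (𝓝 (F Xs + G Ys)) ∧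
    Tendsto (fun k => ‖L (X (k+1)) - Y (k+1)‖) atTop (𝓝 0) := by
  -- the residual
  set R : ℕ → E₂ := fun k => L (X (k+1)) - Y (k+1) with hR
  -- step 1 : L Xs = Ys
  have hLXs : L Xs = Ys := by
    have h := (hsaddle β hβ Xs Ys (Zs + (L Xs - Ys))).1
    simp only [AUG, inner_add_right] at h
    have h2 : ⟪L Xs - Ys, L Xs - Ys⟫ ≤ 0 := by linarith
    have h3 : L Xs - Ys = 0 := by
      rwa [real_inner_self_nonpos] at h2
    rwa [sub_eq_zero] at h3
  -- step 2 : plain Lagrangian saddle inequality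
  have hsad2 : ∀ Xv Yv, F Xs + G Ys ≤ F Xv + G Yv + ⟪L Xv - Yv, Zs⟫ := by
    intro Xv Yv
    by_contra hc
    push_neg at hc
    set c : ℝ := ‖L Xv - Yv‖ ^ 2 with hc2
    have hcn : 0 ≤ c := by positivity
    set A : ℝ := F Xs + G Ys with hA
    set Bv : ℝ := F Xv + G Yv + ⟪L Xv - Yv, Zs⟫ with hB
    have key : ∀ β' > (0:ℝ), A ≤ Bv + β' / 2 * c := by
      intro β' hβ'
      have h := (hsaddle β' hβ' Xv Yv Zs).2
      simp only [AUG, hLXs, sub_self, inner_zero_left, norm_zero] at h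
      simp only [hA, hB, hc2]
      have : (0:ℝ) ^ 2 = 0 := by norm_num
      rw [this] at h
      linarith
    have := key ((A - Bv) / (c + 1)) (div_pos (by linarith) (by linarith))
    have hle : (A - Bv) / (c + 1) * (c + 1) = A - Bv := by
      field_simp
    nlinarith [mul_pos (div_pos (sub_pos.2 hc) (by linarith : (0:ℝ) < c + 1)) (by linarith : (0:ℝ) < c+1)]
  -- step 3 : subgradient inequalities
  have Gineq : ∀ k Yv, G (Y (k+1)) ≤ G Yv - ⟪Yv - Y (k+1), Z (k+1)⟫ := by
    intro k
    set rY : E₂ → ℝ := fun Yv => ⟪L (X (k+1)) - Yv, Z k⟫ + β / 2 * ‖L (X (k+1)) - Yv‖ ^ 2 with hrY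
    have hmin : ∀ Yv, G (Y (k+1)) + rY (Y (k+1)) ≤ G Yv + rY Yv := by
      intro Yv
      have h := hY k Yv
      simp only [AUG, hrY] at h ⊢
      linarith
    have hr : ∀ Yv, ∀ t : ℝ, rY (Y (k+1) + t • (Yv - Y (k+1))) =
        rY (Y (k+1)) + t * (-⟪Yv - Y (k+1), Z k + β • (L (X (k+1)) - Y (k+1))⟫)
          + t ^ 2 * (β / 2 * ‖Yv - Y (k+1)‖ ^ 2) := by
      intro Yv t
      have e1 : L (X (k+1)) - (Y (k+1) + t • (Yv - Y (k+1)))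
          = (L (X (k+1)) - Y (k+1)) - t • (Yv - Y (k+1)) := by module
      simp only [hrY]
      rw [e1]
      generalize hU : L (X (k+1)) - Y (k+1) = u
      generalize hD : Yv - Y (k+1) = d
      simp only [norm_sub_sq_real, inner_sub_left, inner_add_right,
        real_inner_smul_left, real_inner_smul_right, norm_smul, Real.norm_eq_abs,
        mul_pow, sq_abs]
      linear_combination (β * t) * real_inner_comm u d
    have hsub := subgrad hG hmin
      (fun Yv => -⟪Yv - Y (k+1), Z k + β • (L (X (k+1)) - Y (k+1))⟫)
      (fun Yv => β / 2 * ‖Yv - Y (k+1)‖ ^ 2) (fun Yv => by positivity) hr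
    intro Yv
    have h := hsub Yv
    rw [← hZ k] at h
    linarith
  have Fineq : ∀ k Xv, F (X (k+1)) ≤ F Xv
      + ⟪L Xv - L (X (k+1)), Z k + β • (L (X (k+1)) - Y k)⟫ := by
    intro k
    set rX : E₁ → ℝ := fun Xv => ⟪L Xv - Y k, Z k⟫ + β / 2 * ‖L Xv - Y k‖ ^ 2 with hrX
    have hmin : ∀ Xv, F (X (k+1)) + rX (X (k+1)) ≤ F Xv + rX Xv := by
      intro Xv
      have h := hX k Xv
      simp only [AUG, hrX] at h ⊢
      linarith
    have hr : ∀ Xv, ∀ t : ℝ, rX (X (k+1) + t • (Xv - X (k+1))) =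
        rX (X (k+1)) + t * (⟪L Xv - L (X (k+1)), Z k + β • (L (X (k+1)) - Y k)⟫)
          + t ^ 2 * (β / 2 * ‖L Xv - L (X (k+1))‖ ^ 2) := by
      intro Xv t
      have e1 : L (X (k+1) + t • (Xv - X (k+1))) - Y k
          = (L (X (k+1)) - Y k) + t • (L Xv - L (X (k+1))) := by
        rw [_root_.map_add, _root_.map_smul, _root_.map_sub]; module
      simp only [hrX]
      rw [e1]
      generalize hS : L (X (k+1)) - Y k = s
      generalize hW : L Xv - L (X (k+1)) = w
      simp only [norm_add_sq_real, inner_add_left, inner_add_right,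
        real_inner_smul_left, real_inner_smul_right, norm_smul, Real.norm_eq_abs,
        mul_pow, sq_abs]
      linear_combination (-(β * t)) * real_inner_comm s w
    exact subgrad hF hmin _ _ (fun Xv => by positivity) hr
  -- step 4 : inequality A
  have hA : ∀ k, F Xs + G Ys ≤ F (X (k+1)) + G (Y (k+1)) + ⟪R k, Zs⟫ := by
    intro k
    exact hsad2 (X (k+1)) (Y (k+1))
  -- step 5 : inequality B
  have hB : ∀ k, F (X (k+1)) + G (Y (k+1)) + ⟪Z (k+1), R k⟫
      + β * ⟪R k, Y (k+1) - Y k⟫ + β * ⟪Y (k+1) - Ys, Y (k+1) - Y k⟫ ≤ F Xs + G Ys := by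
    intro k
    have f := Fineq k Xs
    have g := Gineq k Ys
    have hzz : Z k + β • (L (X (k+1)) - Y k) = Z (k+1) + β • (Y (k+1) - Y k) := by
      rw [hZ k]; module
    rw [hzz, hLXs] at f
    have id1 : ⟪Ys - L (X (k+1)), Z (k+1) + β • (Y (k+1) - Y k)⟫
        = ⟪Ys - Y (k+1), Z (k+1)⟫ - ⟪Z (k+1), R k⟫
          - β * ⟪R k, Y (k+1) - Y k⟫ - β * ⟪Y (k+1) - Ys, Y (k+1) - Y k⟫ := by
      simp only [hR]
      simp only [inner_sub_left, inner_sub_right, inner_add_left, inner_add_right,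
        real_inner_smul_left, real_inner_smul_right]
      linear_combination (-1 : ℝ) * real_inner_comm (Z (k+1)) (L (X (k+1)))
        + real_inner_comm (Z (k+1)) (Y (k+1))
    rw [id1] at f
    linarith
  -- step 6 : combined inequality C
  have hC : ∀ k, ⟪Z (k+1), R k⟫ - ⟪R k, Zs⟫ + β * ⟪R k, Y (k+1) - Y k⟫
      + β * ⟪Y (k+1) - Ys, Y (k+1) - Y k⟫ ≤ 0 := by
    intro k
    linarith [hA k, hB k]
  -- step 7 : cross term
  have cross : ∀ j, 0 ≤ ⟪R (j+1), Y (j+1+1) - Y (j+1)⟫ := by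
    intro j
    have g1 := Gineq (j+1) (Y (j+1))
    have g2 := Gineq j (Y (j+1+1))
    have id2 : ⟪Y (j+1) - Y (j+1+1), Z (j+1+1)⟫ + ⟪Y (j+1+1) - Y (j+1), Z (j+1)⟫
        = - (β * ⟪R (j+1), Y (j+1+1) - Y (j+1)⟫) := by
      rw [hZ (j+1)]
      simp only [hR, inner_sub_left, inner_sub_right, inner_add_left, inner_add_right,
        real_inner_smul_left, real_inner_smul_right]
      linear_combination β * real_inner_comm (L (X (j+1+1))) (Y (j+1))
        - β * real_inner_comm (Y (j+1+1)) (Y (j+1))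
        - β * real_inner_comm (L (X (j+1+1))) (Y (j+1+1))
        + β * real_inner_comm (Y (j+1+1)) (Y (j+1+1))
    nlinarith [g1, g2, id2, hβ]
  -- step 8 : Lyapunov decrease
  set V : ℕ → ℝ := fun k => ‖Z k - Zs‖ ^ 2 + β ^ 2 * ‖Y k - Ys‖ ^ 2 with hV
  have hD : ∀ j, V (j+1+1) + β ^ 2 * ‖R (j+1)‖ ^ 2 + β ^ 2 * ‖Y (j+1+1) - Y (j+1)‖ ^ 2
      ≤ V (j+1) := by
    intro j
    have e1 : Z (j+1) - Zs = (Z (j+1+1) - Zs) - β • R (j+1) := by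
      rw [hZ (j+1)]; simp only [hR]; module
    have n1d : ‖Z (j+1) - Zs‖ ^ 2 = ‖Z (j+1+1) - Zs‖ ^ 2
        - 2 * (β * (⟪Z (j+1+1), R (j+1)⟫ - ⟪R (j+1), Zs⟫)) + β ^ 2 * ‖R (j+1)‖ ^ 2 := by
      rw [e1, norm_sub_sq_real]
      have c1 : ⟪Z (j+1+1) - Zs, β • R (j+1)⟫
          = β * (⟪Z (j+1+1), R (j+1)⟫ - ⟪R (j+1), Zs⟫) := by
        simp only [inner_sub_left, real_inner_smul_right]
        linear_combination (-β) * real_inner_comm (R (j+1)) Zs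
      rw [c1]
      have c2 : ‖β • R (j+1)‖ ^ 2 = β ^ 2 * ‖R (j+1)‖ ^ 2 := by
        rw [norm_smul, Real.norm_eq_abs, mul_pow, sq_abs]
      rw [c2]
    have e2 : Y (j+1) - Ys = (Y (j+1+1) - Ys) - (Y (j+1+1) - Y (j+1)) := by module
    have n2c : ‖Y (j+1) - Ys‖ ^ 2 = ‖Y (j+1+1) - Ys‖ ^ 2
        - 2 * ⟪Y (j+1+1) - Ys, Y (j+1+1) - Y (j+1)⟫ + ‖Y (j+1+1) - Y (j+1)‖ ^ 2 := by
      rw [e2, norm_sub_sq_real]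
    have n2d : β ^ 2 * ‖Y (j+1) - Ys‖ ^ 2 = β ^ 2 * (‖Y (j+1+1) - Ys‖ ^ 2
        - 2 * ⟪Y (j+1+1) - Ys, Y (j+1+1) - Y (j+1)⟫ + ‖Y (j+1+1) - Y (j+1)‖ ^ 2) := by
      rw [← n2c]
    have Cb := mul_le_mul_of_nonneg_left (hC (j+1)) hβ.le
    rw [mul_zero] at Cb
    have cross2 : 0 ≤ β ^ 2 * ⟪R (j+1), Y (j+1+1) - Y (j+1)⟫ :=
      mul_nonneg (sq_nonneg β) (cross j)
    simp only [hV]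
    nlinarith [n1d, n2d, Cb, cross2]
  -- step 9 : boundedness and summability
  have Vnn : ∀ k, 0 ≤ V k := by intro k; simp only [hV]; positivity
  have hVb : ∀ j, V (j+1) ≤ V 1 := by
    intro j
    induction j with
    | zero => norm_num
    | succ i ih =>
      have := hD i
      nlinarith [sq_nonneg β, norm_nonneg (R (i+1)), norm_nonneg (Y (i+1+1) - Y (i+1)),
        mul_nonneg (sq_nonneg β) (sq_nonneg ‖R (i+1)‖),
        mul_nonneg (sq_nonneg β) (sq_nonneg ‖Y (i+1+1) - Y (i+1)‖)]
  have sb' : ∀ N, (∑ j ∈ Finset.range N, (β ^ 2 * ‖R (j+1)‖ ^ 2 + β ^ 2 * ‖Y (j+1+1) - Y (j+1)‖ ^ 2))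
      + V (N+1) ≤ V 1 := by
    intro N
    induction N with
    | zero => simp
    | succ i ih =>
      rw [Finset.sum_range_succ]
      have := hD i
      linarith
  -- step 10 : summability and residual convergence
  have hsum : Summable (fun j => β ^ 2 * ‖R (j+1)‖ ^ 2 + β ^ 2 * ‖Y (j+1+1) - Y (j+1)‖ ^ 2) := by
    apply summable_of_sum_range_le (c := V 1) (fun j => by positivity)
    intro N
    have h1 := sb' N
    have h2 := Vnn (N+1)
    linarith
  have t0 := hsum.tendsto_atTop_zero
  have tR2 : Tendsto (fun j => β ^ 2 * ‖R (j+1)‖ ^ 2) atTop (𝓝 0) := by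
    apply squeeze_zero (fun j => by positivity) (fun j => ?_) t0
    nlinarith [mul_nonneg (sq_nonneg β) (sq_nonneg ‖Y (j+1+1) - Y (j+1)‖)]
  have tY2 : Tendsto (fun j => β ^ 2 * ‖Y (j+1+1) - Y (j+1)‖ ^ 2) atTop (𝓝 0) := by
    apply squeeze_zero (fun j => by positivity) (fun j => ?_) t0
    nlinarith [mul_nonneg (sq_nonneg β) (sq_nonneg ‖R (j+1)‖)]
  have sqrt_trick : ∀ (f : ℕ → E₂), Tendsto (fun j => β ^ 2 * ‖f j‖ ^ 2) atTop (𝓝 0) →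
      Tendsto (fun j => ‖f j‖) atTop (𝓝 0) := by
    intro f hf
    have h1 : Tendsto (fun j => ‖f j‖ ^ 2) atTop (𝓝 0) := by
      have h2 := hf.const_mul (1/β^2)
      have he : (fun j => (1/β^2) * (β ^ 2 * ‖f j‖ ^ 2)) = fun j => ‖f j‖ ^ 2 := by
        funext j; field_simp
      rw [he] at h2
      simpa using h2
    have h3 := (Real.continuous_sqrt.tendsto 0).comp h1
    have he2 : (fun j => Real.sqrt (‖f j‖ ^ 2)) = fun j => ‖f j‖ := by
      funext j; exact Real.sqrt_sq (norm_nonneg _)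
    simpa [Function.comp_def, he2, Real.sqrt_zero] using h3
  have tR : Tendsto (fun j => ‖R (j+1)‖) atTop (𝓝 0) := sqrt_trick (fun j => R (j+1)) tR2
  have tYd1 : Tendsto (fun j => ‖Y (j+1+1) - Y (j+1)‖) atTop (𝓝 0) :=
    sqrt_trick (fun j => Y (j+1+1) - Y (j+1)) tY2
  have tRk : Tendsto (fun k => ‖R k‖) atTop (𝓝 0) := (tendsto_add_atTop_iff_nat 1).mp tR
  have tYd : Tendsto (fun k => ‖Y (k+1) - Y k‖) atTop (𝓝 0) :=
    (tendsto_add_atTop_iff_nat 1).mp tYd1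
  -- step 11 : bounds
  set C1 : ℝ := Real.sqrt (V 1) + ‖Zs‖ with hC1
  set C2 : ℝ := Real.sqrt (V 1) / β with hC2
  have zb : ∀ k, ‖Z (k+1)‖ ≤ C1 := by
    intro k
    have h1 : ‖Z (k+1) - Zs‖ ^ 2 ≤ V 1 := by
      refine le_trans ?_ (hVb k)
      simp only [hV]
      nlinarith [mul_nonneg (sq_nonneg β) (sq_nonneg ‖Y (k+1) - Ys‖)]
    have h2 : ‖Z (k+1) - Zs‖ ≤ Real.sqrt (V 1) := by
      rw [← Real.sqrt_sq (norm_nonneg (Z (k+1) - Zs))]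
      exact Real.sqrt_le_sqrt h1
    calc ‖Z (k+1)‖ = ‖(Z (k+1) - Zs) + Zs‖ := by rw [sub_add_cancel]
      _ ≤ ‖Z (k+1) - Zs‖ + ‖Zs‖ := norm_add_le _ _
      _ ≤ C1 := by rw [hC1]; linarith
  have yb : ∀ k, ‖Y (k+1) - Ys‖ ≤ C2 := by
    intro k
    have h1 : (β * ‖Y (k+1) - Ys‖) ^ 2 ≤ V 1 := by
      refine le_trans ?_ (hVb k)
      simp only [hV]
      nlinarith [sq_nonneg ‖Z (k+1) - Zs‖]
    have h2 : β * ‖Y (k+1) - Ys‖ ≤ Real.sqrt (V 1) := by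
      rw [← Real.sqrt_sq (by positivity : (0:ℝ) ≤ β * ‖Y (k+1) - Ys‖)]
      exact Real.sqrt_le_sqrt h1
    rw [hC2, le_div_iff₀ hβ]
    linarith
  -- step 12 : the two limits
  have pa : Tendsto (fun k => ⟪R k, Zs⟫) atTop (𝓝 0) := by
    refine squeeze_zero_norm (a := fun k => ‖R k‖ * ‖Zs‖) (fun k => ?_)
      (by simpa using tRk.mul_const ‖Zs‖)
    rw [Real.norm_eq_abs]
    exact abs_real_inner_le_norm _ _
  have pb : Tendsto (fun k => ⟪Z (k+1), R k⟫ + β * ⟪R k, Y (k+1) - Y k⟫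
      + β * ⟪Y (k+1) - Ys, Y (k+1) - Y k⟫) atTop (𝓝 0) := by
    refine squeeze_zero_norm
      (a := fun k => C1 * ‖R k‖ + β * (‖R k‖ * ‖Y (k+1) - Y k‖) + (β * C2) * ‖Y (k+1) - Y k‖)
      (fun k => ?_) ?_
    · rw [Real.norm_eq_abs]
      have i1 := abs_real_inner_le_norm (Z (k+1)) (R k)
      have i2 := abs_real_inner_le_norm (R k) (Y (k+1) - Y k)
      have i3 := abs_real_inner_le_norm (Y (k+1) - Ys) (Y (k+1) - Y k)
      have j1 := mul_le_mul_of_nonneg_right (zb k) (norm_nonneg (R k))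
      have j2 := mul_le_mul_of_nonneg_left
        (mul_le_mul_of_nonneg_right (yb k) (norm_nonneg (Y (k+1) - Y k))) hβ.le
      have habs := abs_add_three (⟪Z (k+1), R k⟫) (β * ⟪R k, Y (k+1) - Y k⟫)
        (β * ⟪Y (k+1) - Ys, Y (k+1) - Y k⟫)
      rw [abs_mul, abs_mul, abs_of_pos hβ] at habs
      have i2' := mul_le_mul_of_nonneg_left i2 hβ.le
      have i3' := mul_le_mul_of_nonneg_left i3 hβ.le
      show _ ≤ C1 * ‖R k‖ + β * (‖R k‖ * ‖Y (k+1) - Y k‖) + (β * C2) * ‖Y (k+1) - Y k‖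
      linarith [habs, i1, j1, i2', i3', j2]
    · have g1 := tRk.const_mul C1
      have g2 := (tRk.mul tYd).const_mul β
      have g3 := tYd.const_mul (β * C2)
      have := (g1.add g2).add g3
      simpa using this
  constructor
  · have lower : ∀ k, (F Xs + G Ys) - ⟪R k, Zs⟫ ≤ F (X (k+1)) + G (Y (k+1)) := by
      intro k; linarith [hA k]
    have upper : ∀ k, F (X (k+1)) + G (Y (k+1)) ≤ (F Xs + G Ys)
        - (⟪Z (k+1), R k⟫ + β * ⟪R k, Y (k+1) - Y k⟫
          + β * ⟪Y (k+1) - Ys, Y (k+1) - Y k⟫) := by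
      intro k; linarith [hB k]
    have ta : Tendsto (fun k => (F Xs + G Ys) - ⟪R k, Zs⟫) atTop (𝓝 (F Xs + G Ys)) := by
      have hconst : Tendsto (fun _ : ℕ => F Xs + G Ys) atTop (𝓝 (F Xs + G Ys)) :=
        tendsto_const_nhds
      simpa using hconst.sub pa
    have tb : Tendsto (fun k => (F Xs + G Ys)
        - (⟪Z (k+1), R k⟫ + β * ⟪R k, Y (k+1) - Y k⟫
          + β * ⟪Y (k+1) - Ys, Y (k+1) - Y k⟫)) atTop (𝓝 (F Xs + G Ys)) := by
      have hconst : Tendsto (fun _ : ℕ => F Xs + G Ys) atTop (𝓝 (F Xs + G Ys)) :=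
        tendsto_const_nhds
      simpa using hconst.sub pb
    exact tendsto_of_tendsto_of_tendsto_of_le_of_le ta tb lower upper
  · exact tRk


noncomputable def eM {m n : ℕ} : Matrix (Fin m) (Fin n) ℝ ≃ₗ[ℝ] EuclideanSpace ℝ (Fin m × Fin n) where
  toFun A := WithLp.toLp 2 (fun p : Fin m × Fin n => A p.1 p.2)
  invFun v := Matrix.of fun i j => v (i, j)
  map_add' _ _ := rfl
  map_smul' _ _ := rfl
  left_inv _ := rfl
  right_inv _ := rfl

lemma fip_eq {m n : ℕ} (A B : Matrix (Fin m) (Fin n) ℝ) :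
    fip A B = ⟪eM A, eM B⟫ := by
  simp only [fip, Matrix.trace, Matrix.diag, Matrix.mul_apply, Matrix.transpose_apply,
    PiLp.inner_apply, RCLike.inner_apply, conj_trivial, eM, LinearEquiv.coe_mk]
  rw [Fintype.sum_prod_type]
  rw [Finset.sum_comm]
  exact Finset.sum_congr rfl fun i _ => Finset.sum_congr rfl fun j _ => mul_comm _ _

lemma fnorm_eq {m n : ℕ} (A : Matrix (Fin m) (Fin n) ℝ) : fnorm A = ‖eM A‖ := by
  rw [fnorm, fip_eq, real_inner_self_eq_norm_mul_norm]
  exact Real.sqrt_mul_self (norm_nonneg _)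

theorem stmt2 {m n p q : ℕ}
    (L : Matrix (Fin m) (Fin n) ℝ →ₗ[ℝ] Matrix (Fin p) (Fin q) ℝ)
    (H₁ : Matrix (Fin n) (Fin n) ℝ) (H₂ : Matrix (Fin m) (Fin m) ℝ)
    (B : Matrix (Fin m) (Fin n) ℝ)
    (F : Matrix (Fin m) (Fin n) ℝ → ℝ)
    (hFdef : ∀ X, F X = (fnorm (H₂ * X * H₁ᵀ - B)) ^ 2)
    (G : Matrix (Fin p) (Fin q) ℝ → ℝ) (hG : ConvexOn ℝ Set.univ G)
    (β : ℝ) (hβ : 0 < β)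
    (Xs : Matrix (Fin m) (Fin n) ℝ) (Ys Zs : Matrix (Fin p) (Fin q) ℝ)
    (hsaddle : ∀ β' > (0:ℝ), ∀ X Y Z,
      aug L F G β' Xs Ys Z ≤ aug L F G β' Xs Ys Zs ∧
      aug L F G β' Xs Ys Zs ≤ aug L F G β' X Y Zs)
    (X : ℕ → Matrix (Fin m) (Fin n) ℝ) (Y Z : ℕ → Matrix (Fin p) (Fin q) ℝ)
    (hX : ∀ k, ∀ X', aug L F G β (X (k+1)) (Y k) (Z k) ≤ aug L F G β X' (Y k) (Z k))
    (hY : ∀ k, ∀ Y', aug L F G β (X (k+1)) (Y (k+1)) (Z k) ≤ aug L F G β (X (k+1)) Y' (Z k))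
    (hZ : ∀ k, Z (k+1) = Z k + β • (L (X (k+1)) - Y (k+1))) :
    Tendsto (fun k => F (X (k+1)) + G (Y (k+1))) atTop (𝓝 (F Xs + G Ys)) ∧
    Tendsto (fun k => fnorm (L (X (k+1)) - Y (k+1))) atTop (𝓝 0) := by
  set e₁ : Matrix (Fin m) (Fin n) ℝ ≃ₗ[ℝ] EuclideanSpace ℝ (Fin m × Fin n) := eM with he₁
  set e₂ : Matrix (Fin p) (Fin q) ℝ ≃ₗ[ℝ] EuclideanSpace ℝ (Fin p × Fin q) := eM with he₂
  set L' : EuclideanSpace ℝ (Fin m × Fin n) →ₗ[ℝ] EuclideanSpace ℝ (Fin p × Fin q) :=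
    e₂.toLinearMap.comp (L.comp e₁.symm.toLinearMap) with hL'
  set F' : EuclideanSpace ℝ (Fin m × Fin n) → ℝ := fun v => F (e₁.symm v) with hF'
  set G' : EuclideanSpace ℝ (Fin p × Fin q) → ℝ := fun w => G (e₂.symm w) with hG'
  have hLe : ∀ Xv Yv, L' (e₁ Xv) - e₂ Yv = e₂ (L Xv - Yv) := by
    intro Xv Yv
    simp [hL', _root_.map_sub]
  have haug : ∀ β' Xv Yv Zv,
      aug L F G β' Xv Yv Zv = AUG L' F' G' β' (e₁ Xv) (e₂ Yv) (e₂ Zv) := by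
    intro β' Xv Yv Zv
    have fipe : ∀ (A B' : Matrix (Fin p) (Fin q) ℝ), fip A B' = ⟪e₂ A, e₂ B'⟫ :=
      fun A B' => fip_eq A B'
    have fne : ∀ (A : Matrix (Fin p) (Fin q) ℝ), fnorm A = ‖e₂ A‖ :=
      fun A => fnorm_eq A
    simp only [aug, AUG, hLe Xv Yv, ← fipe, ← fne, hF', hG',
      LinearEquiv.symm_apply_apply]
  have hFc : ConvexOn ℝ Set.univ F' := by
    constructor
    · exact convex_univ
    · intro u _ v _ a b ha hb hab
      have h1 : e₁.symm (a • u + b • v) = a • e₁.symm u + b • e₁.symm v := by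
        simp [_root_.map_add, _root_.map_smul]
      have key : ∀ U V : Matrix (Fin m) (Fin n) ℝ,
          H₂ * (a • U + b • V) * H₁ᵀ - B
            = a • (H₂ * U * H₁ᵀ - B) + b • (H₂ * V * H₁ᵀ - B) := by
        intro U V
        have hB : a • B + b • B = B := by rw [← add_smul, hab, one_smul]
        have hd : H₂ * (a • U + b • V) * H₁ᵀ
            = a • (H₂ * U * H₁ᵀ) + b • (H₂ * V * H₁ᵀ) := by
          simp [Matrix.mul_add, Matrix.add_mul, Matrix.mul_smul, Matrix.smul_mul]
        have hfin : a • (H₂ * U * H₁ᵀ) + b • (H₂ * V * H₁ᵀ) - B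
            = a • (H₂ * U * H₁ᵀ - B) + b • (H₂ * V * H₁ᵀ - B) + ((a + b) - 1) • B := by
          module
        rw [hd, hfin, hab]
        simp
      simp only [hF', smul_eq_mul, h1, hFdef, key, fnorm_eq, _root_.map_add, _root_.map_smul]
      exact sq_norm_combo ha hb hab _ _
  have hGc : ConvexOn ℝ Set.univ G' := by
    have h := hG.comp_linearMap (e₂.symm.toLinearMap)
    exact h
  have hsad' : ∀ β' > (0:ℝ), ∀ x y z,
      AUG L' F' G' β' (e₁ Xs) (e₂ Ys) z ≤ AUG L' F' G' β' (e₁ Xs) (e₂ Ys) (e₂ Zs) ∧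
      AUG L' F' G' β' (e₁ Xs) (e₂ Ys) (e₂ Zs) ≤ AUG L' F' G' β' x y (e₂ Zs) := by
    intro β' hβ' x y z
    have h := hsaddle β' hβ' (e₁.symm x) (e₂.symm y) (e₂.symm z)
    rw [haug, haug, haug] at h
    simpa [LinearEquiv.apply_symm_apply] using h
  have hX' : ∀ k, ∀ x, AUG L' F' G' β (e₁ (X (k+1))) (e₂ (Y k)) (e₂ (Z k))
      ≤ AUG L' F' G' β x (e₂ (Y k)) (e₂ (Z k)) := by
    intro k x
    have h := hX k (e₁.symm x)
    rw [haug, haug] at h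
    simpa [LinearEquiv.apply_symm_apply] using h
  have hY' : ∀ k, ∀ y, AUG L' F' G' β (e₁ (X (k+1))) (e₂ (Y (k+1))) (e₂ (Z k))
      ≤ AUG L' F' G' β (e₁ (X (k+1))) y (e₂ (Z k)) := by
    intro k y
    have h := hY k (e₂.symm y)
    rw [haug, haug] at h
    simpa [LinearEquiv.apply_symm_apply] using h
  have hZ' : ∀ k, e₂ (Z (k+1)) = e₂ (Z k) + β • (L' (e₁ (X (k+1))) - e₂ (Y (k+1))) := by
    intro k
    rw [hLe, ← _root_.map_smul, ← _root_.map_add, ← hZ k]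
  have main := admm_abstract L' F' hFc G' hGc β hβ (e₁ Xs) (e₂ Ys) (e₂ Zs) hsad'
    (fun k => e₁ (X k)) (fun k => e₂ (Y k)) (fun k => e₂ (Z k)) hX' hY' hZ'
  constructor
  · have h := main.1
    simpa [hF', hG', LinearEquiv.symm_apply_apply] using h
  · have h := main.2
    have he : (fun k => ‖L' (e₁ (X (k+1))) - e₂ (Y (k+1))‖)
        = fun k => fnorm (L (X (k+1)) - Y (k+1)) := by
      funext k
      have fne : ∀ (A : Matrix (Fin p) (Fin q) ℝ), fnorm A = ‖e₂ A‖ :=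
        fun A => fnorm_eq A
      rw [hLe, ← fne]
    rwa [he] at h
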